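/- Let π be a uniformly random permutation of [N], X₁,...,X_N fixed, X̄ = (1/N)Σ X_l, and X^π_{≥k} = (1/(N+1-k))Σ_{i=k}^N X_{π(i)}. For fixed matrices W₁,...,W_N, the average over all permutations π of Σ_{k=1}^N W_{π(k)}(X_{π(k)} - X^π_{≥k}) equals (1/(1+ε_N))·Σ_{k=1}^N (W_k - W̄)X_k, where W̄ = (1/N)Σ W_k and ε_N = (H_N-1)/(N-H_N). -/

import Mathlib

open Matrix Finset

/-- The `n`-th harmonic number `H_n = 1 + 1/2 + ⋯ + 1/n`. -/
noncomputable def harmonic' (n : ℕ) : ℝ := ∑ j ∈ Finset.range n, (1 : ℝ) / (j + 1)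

/-- `ε_n = (H_n - 1)/(n - H_n)`. -/
noncomputable def epsN (n : ℕ) : ℝ := (harmonic' n - 1) / ((n : ℝ) - harmonic' n)

lemma harmonic'_lt (n : ℕ) (hn : 2 ≤ n) : harmonic' n < n := by
  have h := Finset.sum_lt_sum (s := Finset.range n) (f := fun j : ℕ => (1:ℝ)/(j+1))
    (g := fun _ => (1:ℝ))
    (fun j _ => by
      rw [div_le_one (by positivity)]
      exact le_add_of_nonneg_left (by positivity))
    ⟨1, Finset.mem_range.2 (by omega), by norm_num⟩
  simpa [harmonic'] using h

lemma harmonic'_sum (N : ℕ) : ∑ k : Fin N, ((N:ℝ) - k)⁻¹ = harmonic' N := by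
  rw [Fin.sum_univ_eq_sum_range (fun j => ((N:ℝ) - j)⁻¹), ← Finset.sum_range_reflect, harmonic']
  refine Finset.sum_congr rfl fun j hj => ?_
  rw [Finset.mem_range] at hj
  have h1 : 1 + j ≤ N := by omega
  rw [show N - 1 - j = N - (1+j) by omega, Nat.cast_sub h1]
  push_cast
  rw [one_div]
  congr 1
  ring

/-- The permutation-average of `∑ₖ W_{π(k)}(X_{π(k)} - X^π_{≥k})`, where
`X^π_{≥k} = (1/(N+1-k))·∑_{i=k}^N X_{π(i)}`, equals `(1/(1+ε_N))·∑ₖ (Wₖ - W̄)Xₖ`. -/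
theorem perm_average_centered_sum
    {N p q r : ℕ} (hN : 2 ≤ N)
    (W : Fin N → Matrix (Fin p) (Fin q) ℝ)
    (X : Fin N → Matrix (Fin q) (Fin r) ℝ) :
    ((N.factorial : ℝ))⁻¹ •
        ∑ σ : Equiv.Perm (Fin N), ∑ k : Fin N,
          W (σ k) *
            (X (σ k) -
              ((N : ℝ) - (k : ℕ))⁻¹ •
                ∑ i ∈ Finset.univ.filter (fun i => k ≤ i), X (σ i)) =
      (1 + epsN N)⁻¹ • ∑ k, (W k - ((N : ℝ))⁻¹ • ∑ j, W j) * X k := by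
  classical
  have hN2 : (2:ℝ) ≤ (N:ℝ) := by exact_mod_cast hN
  have hN0 : (N:ℝ) ≠ 0 := by linarith
  have hN1 : (N:ℝ) - 1 ≠ 0 := by linarith
  have hfac : (N.factorial : ℝ) ≠ 0 := by
    exact_mod_cast N.factorial_ne_zero
  have hHlt : harmonic' N < N := harmonic'_lt N hN
  have hNH : (N:ℝ) - harmonic' N ≠ 0 := sub_ne_zero.mpr hHlt.ne'
  set A : Matrix (Fin p) (Fin r) ℝ := ∑ a, W a * X a with hA
  set SW : Matrix (Fin p) (Fin q) ℝ := ∑ a, W a with hSW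
  set T : Matrix (Fin q) (Fin r) ℝ := ∑ a, X a with hT
  set D : Matrix (Fin p) (Fin r) ℝ := ((N:ℝ)⁻¹ * N.factorial) • A with hD
  set V : Matrix (Fin p) (Fin r) ℝ :=
    (((N:ℝ)-1)⁻¹ * ((N:ℝ)⁻¹ * N.factorial)) • (SW * T - A) with hV
  set F : Fin N → Fin N → Matrix (Fin p) (Fin r) ℝ :=
    fun k i => ∑ σ : Equiv.Perm (Fin N), W (σ k) * X (σ i) with hF
  -- reindexing invariance
  have reindex : ∀ (τ : Equiv.Perm (Fin N)) (k i : Fin N), F (τ k) (τ i) = F k i := by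
    intro τ k i
    simp only [hF]
    rw [← Equiv.sum_comp (Equiv.mulRight τ) (fun σ => W (σ k) * X (σ i))]
    simp [Equiv.Perm.mul_apply]
  have diagconst : ∀ k k' : Fin N, F k k = F k' k' := by
    intro k k'
    have h := reindex (Equiv.swap k' k) k' k'
    rwa [Equiv.swap_apply_left] at h
  have offconst : ∀ (k i k' i' : Fin N), k ≠ i → k' ≠ i' → F k i = F k' i' := by
    intro k i k' i' hki hki'
    set τ1 := Equiv.swap k k' with hτ1
    have h1 : τ1 k = k' := Equiv.swap_apply_left k k'
    have h2 : τ1 i ≠ k' := fun h => hki (τ1.injective (h.trans h1.symm)).symm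
    set τ2 := Equiv.swap (τ1 i) i' with hτ2
    have h3 : τ2 (τ1 i) = i' := Equiv.swap_apply_left _ _
    have h4 : τ2 k' = k' := Equiv.swap_apply_of_ne_of_ne (Ne.symm h2) hki'
    have h := reindex (τ1.trans τ2) k i
    rw [Equiv.trans_apply, Equiv.trans_apply, h1, h4, h3] at h
    exact h.symm
  -- diagonal value
  have hdiag : ∀ k : Fin N, F k k = D := by
    intro k
    have h1 : ∑ k' : Fin N, F k' k' = (N.factorial : ℝ) • A := by
      simp only [hF]
      rw [Finset.sum_comm]
      rw [Finset.sum_congr rfl (fun σ _ => Equiv.sum_comp σ (fun a => W a * X a))]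
      rw [Finset.sum_const, Finset.card_univ, Fintype.card_perm, Fintype.card_fin,
        ← Nat.cast_smul_eq_nsmul ℝ]
    have h2 : ∑ k' : Fin N, F k' k' = (N:ℝ) • F k k := by
      rw [Finset.sum_congr rfl (fun k' _ => diagconst k' k), Finset.sum_const,
        Finset.card_univ, Fintype.card_fin, ← Nat.cast_smul_eq_nsmul ℝ]
    have h3 : (N:ℝ) • F k k = (N.factorial:ℝ) • A := by rw [← h2, h1]
    calc F k k = (N:ℝ)⁻¹ • ((N:ℝ) • F k k) := by
          rw [smul_smul, inv_mul_cancel₀ hN0, one_smul]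
      _ = D := by rw [h3, smul_smul, hD]
  -- row sums of W
  set G : Fin N → Matrix (Fin p) (Fin q) ℝ :=
    fun k => ∑ σ : Equiv.Perm (Fin N), W (σ k) with hGdef
  have Gconst : ∀ k k' : Fin N, G k = G k' := by
    intro k k'
    simp only [hGdef]
    rw [← Equiv.sum_comp (Equiv.mulRight (Equiv.swap k k')) (fun σ => W (σ k'))]
    simp [Equiv.Perm.mul_apply]
  have hGval : ∀ k : Fin N, G k = ((N:ℝ)⁻¹ * N.factorial) • SW := by
    intro k
    have h1 : ∑ k' : Fin N, G k' = (N.factorial:ℝ) • SW := by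
      simp only [hGdef]
      rw [Finset.sum_comm]
      rw [Finset.sum_congr rfl (fun σ _ => Equiv.sum_comp σ W)]
      rw [Finset.sum_const, Finset.card_univ, Fintype.card_perm, Fintype.card_fin,
        ← Nat.cast_smul_eq_nsmul ℝ]
    have h2 : ∑ k' : Fin N, G k' = (N:ℝ) • G k := by
      rw [Finset.sum_congr rfl (fun k' _ => Gconst k' k), Finset.sum_const,
        Finset.card_univ, Fintype.card_fin, ← Nat.cast_smul_eq_nsmul ℝ]
    have h3 : (N:ℝ) • G k = (N.factorial:ℝ) • SW := by rw [← h2, h1]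
    calc G k = (N:ℝ)⁻¹ • ((N:ℝ) • G k) := by
          rw [smul_smul, inv_mul_cancel₀ hN0, one_smul]
      _ = _ := by rw [h3, smul_smul]
  -- off-diagonal value
  have hoff : ∀ k i : Fin N, k ≠ i → F k i = V := by
    intro k i hki
    have hrow : ∑ i' : Fin N, F k i' = ((N:ℝ)⁻¹ * N.factorial) • (SW * T) := by
      simp only [hF]
      rw [Finset.sum_comm]
      have hinner : ∀ σ : Equiv.Perm (Fin N),
          ∑ i' : Fin N, W (σ k) * X (σ i') = W (σ k) * T := by
        intro σ
        rw [← Matrix.mul_sum]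
        congr 1
        exact Equiv.sum_comp σ X
      rw [Finset.sum_congr rfl (fun σ _ => hinner σ), ← Matrix.sum_mul]
      have : (∑ σ : Equiv.Perm (Fin N), W (σ k)) = G k := rfl
      rw [this, hGval k, Matrix.smul_mul]
    rw [← Finset.add_sum_erase _ _ (Finset.mem_univ k)] at hrow
    have herase : ∑ i' ∈ Finset.univ.erase k, F k i' = ((N:ℝ) - 1) • F k i := by
      rw [Finset.sum_congr rfl
        (fun i' hi' => offconst k i' k i (Finset.ne_of_mem_erase hi').symm hki)]
      rw [Finset.sum_const, Finset.card_erase_of_mem (Finset.mem_univ k),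
        Finset.card_univ, Fintype.card_fin, ← Nat.cast_smul_eq_nsmul ℝ,
        Nat.cast_sub (le_trans one_le_two hN), Nat.cast_one]
    rw [herase, hdiag k] at hrow
    have h5 : ((N:ℝ) - 1) • F k i = ((N:ℝ)⁻¹ * N.factorial) • (SW * T) - D := by
      rw [eq_sub_iff_add_eq, add_comm]
      exact hrow
    have h6 : F k i = ((N:ℝ)-1)⁻¹ • (((N:ℝ)⁻¹ * N.factorial) • (SW * T) - D) := by
      rw [eq_inv_smul_iff₀ hN1]
      exact h5
    rw [h6, hD, hV]
    match_scalars <;> field_simp <;> ring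
  -- reorganize the main sum
  have hmain : ∑ σ : Equiv.Perm (Fin N), ∑ k : Fin N,
      W (σ k) * (X (σ k) -
        ((N:ℝ) - (k:ℕ))⁻¹ • ∑ i ∈ Finset.univ.filter (fun i => k ≤ i), X (σ i))
      = ∑ k : Fin N, (F k k -
          ((N:ℝ) - (k:ℕ))⁻¹ • ∑ i ∈ Finset.univ.filter (fun i => k ≤ i), F k i) := by
    rw [Finset.sum_comm]
    refine Finset.sum_congr rfl fun k _ => ?_
    simp only [Matrix.mul_sub, Matrix.mul_smul, Matrix.mul_sum, hF]
    rw [Finset.sum_sub_distrib, ← Finset.smul_sum, Finset.sum_comm]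
  -- value of the filtered sum
  have hfiltered : ∀ k : Fin N, ∑ i ∈ Finset.univ.filter (fun i => k ≤ i), F k i
      = F k k + ((N:ℝ) - 1 - (k:ℕ)) • V := by
    intro k
    have hk : k ∈ Finset.univ.filter (fun i : Fin N => k ≤ i) := by simp
    rw [← Finset.add_sum_erase _ _ hk]
    congr 1
    have herase : (Finset.univ.filter (fun i : Fin N => k ≤ i)).erase k
        = Finset.univ.filter (fun i : Fin N => k < i) := by
      ext i
      simp only [Finset.mem_erase, Finset.mem_filter, Finset.mem_univ, true_and]
      constructor
      · rintro ⟨h1, h2⟩; exact lt_of_le_of_ne h2 (Ne.symm h1)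
      · intro h; exact ⟨ne_of_gt h, le_of_lt h⟩
    rw [herase]
    rw [Finset.sum_congr rfl (fun i hi => hoff k i (ne_of_lt (Finset.mem_filter.mp hi).2))]
    rw [Finset.sum_const,
      show (Finset.univ.filter (fun i : Fin N => k < i)) = Finset.Ioi k by ext i; simp,
      Fin.card_Ioi, ← Nat.cast_smul_eq_nsmul ℝ]
    congr 1
    have h1 : (k:ℕ) ≤ N - 1 := Nat.le_sub_one_of_lt k.isLt
    have h2 : 1 ≤ N := le_trans one_le_two hN
    rw [Nat.cast_sub h1, Nat.cast_sub h2, Nat.cast_one]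
  -- per-k term
  have hterm : ∀ k : Fin N,
      F k k - ((N:ℝ)-(k:ℕ))⁻¹ • (F k k + ((N:ℝ) - 1 - (k:ℕ)) • V)
      = (1 - ((N:ℝ)-(k:ℕ))⁻¹) • (D - V) := by
    intro k
    have hklt : ((k:ℕ):ℝ) < N := by exact_mod_cast k.isLt
    have hk : ((N:ℝ) - (k:ℕ)) ≠ 0 := by linarith
    rw [hdiag k]
    match_scalars <;> (field_simp; try ring) <;> simp
  have hstep : ∀ k : Fin N,
      F k k - ((N:ℝ)-(k:ℕ))⁻¹ • ∑ i ∈ Finset.univ.filter (fun i => k ≤ i), F k i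
        = (1 - ((N:ℝ)-(k:ℕ))⁻¹) • (D - V) := by
    intro k
    rw [hfiltered k]
    exact hterm k
  rw [hmain, Finset.sum_congr rfl (fun k _ => hstep k)]
  -- sum the scalars
  have hsum : ∑ k : Fin N, (1 - ((N:ℝ) - (k:ℕ))⁻¹) • (D - V)
      = ((N:ℝ) - harmonic' N) • (D - V) := by
    rw [← Finset.sum_smul]
    congr 1
    rw [Finset.sum_sub_distrib, Finset.sum_const, Finset.card_univ, Fintype.card_fin,
      harmonic'_sum N, nsmul_eq_mul, mul_one]
  rw [hsum]
  -- simplify RHS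
  have hRHS : ∑ k, (W k - ((N : ℝ))⁻¹ • ∑ j, W j) * X k = A - (N:ℝ)⁻¹ • (SW * T) := by
    simp only [Matrix.sub_mul, Matrix.smul_mul]
    rw [Finset.sum_sub_distrib, ← Finset.smul_sum, ← Matrix.mul_sum]
  rw [hRHS, hD, hV]
  simp only [epsN]
  match_scalars <;> (field_simp; try ring) <;>
    (have hN1' : -1 + (N:ℝ) ≠ 0 := by linarith
     field_simp; try ring)
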